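/- Let a, b ∈ ℝ with a > 0 and b > 0, and let c ∈ ℝ with a + b − c ≥ 0 and a + b + c ≥ 0. For α ∈ [0, 2π), h ∈ [0, 1] and σ, τ ∈ {−1, 1}, set u = √((a+b−c)/(2b)) cos α, v = √((a+b−c)/(2a)) sin α, and k = √((a+b+c)/(2(a + b − (a(1−h²)+b)u² − (b(1−h²)+a)v²))), assuming the expression inside this last square root has positive denominator. Define x = σ k √(1 − u² − v²), y = h k u, z = h k v, and w = τ√(1 − k²(1 − (1−h²)(u² + v²))), assuming 1 − u² − v² ≥ 0 and 1 − k²(1 − (1−h²)(u² + v²)) ≥ 0. Then (x, y, z, w) satisfies (a+b)x² + (a−b)y² + (−a+b)z² + (−a−b)w² = c and x² + y² + z² + w² = 1. -/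

import Mathlib

open Real

/-- the yz-caps parameterization satisfies the diagonalized spin-quadric
system. -/
theorem statement16 (a b c : ℝ) (ha : 0 < a) (hb : 0 < b)
    (h1 : 0 ≤ a + b - c) (h2 : 0 ≤ a + b + c)
    (α h σ τ : ℝ) (hα : α ∈ Set.Ico (0 : ℝ) (2 * π)) (hh : h ∈ Set.Icc (0 : ℝ) 1)
    (hσ : σ = -1 ∨ σ = 1) (hτ : τ = -1 ∨ τ = 1)
    (u v k x y z w : ℝ)
    (hu : u = Real.sqrt ((a + b - c) / (2 * b)) * Real.cos α)
    (hv : v = Real.sqrt ((a + b - c) / (2 * a)) * Real.sin α)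
    (hden : 0 < 2 * (a + b - (a * (1 - h ^ 2) + b) * u ^ 2 - (b * (1 - h ^ 2) + a) * v ^ 2))
    (hk : k = Real.sqrt ((a + b + c)
        / (2 * (a + b - (a * (1 - h ^ 2) + b) * u ^ 2 - (b * (1 - h ^ 2) + a) * v ^ 2))))
    (huv : 0 ≤ 1 - u ^ 2 - v ^ 2)
    (hx : x = σ * k * Real.sqrt (1 - u ^ 2 - v ^ 2))
    (hy : y = h * k * u)
    (hz : z = h * k * v)
    (hw0 : 0 ≤ 1 - k ^ 2 * (1 - (1 - h ^ 2) * (u ^ 2 + v ^ 2)))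
    (hw : w = τ * Real.sqrt (1 - k ^ 2 * (1 - (1 - h ^ 2) * (u ^ 2 + v ^ 2)))) :
    (a + b) * x ^ 2 + (a - b) * y ^ 2 + (-a + b) * z ^ 2 + (-a - b) * w ^ 2 = c
    ∧ x ^ 2 + y ^ 2 + z ^ 2 + w ^ 2 = 1 := by
  have hσ2 : σ ^ 2 = 1 := by rcases hσ with h' | h' <;> rw [h'] <;> norm_num
  have hτ2 : τ ^ 2 = 1 := by rcases hτ with h' | h' <;> rw [h'] <;> norm_num
  have hk2 : k ^ 2 = (a + b + c)
      / (2 * (a + b - (a * (1 - h ^ 2) + b) * u ^ 2 - (b * (1 - h ^ 2) + a) * v ^ 2)) := by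
    rw [hk, sq_sqrt (div_nonneg h2 hden.le)]
  have hx2 : x ^ 2 = k ^ 2 * (1 - u ^ 2 - v ^ 2) := by
    rw [hx, mul_pow, mul_pow, sq_sqrt huv, hσ2, one_mul]
  have hy2 : y ^ 2 = h ^ 2 * k ^ 2 * u ^ 2 := by rw [hy]; ring
  have hz2 : z ^ 2 = h ^ 2 * k ^ 2 * v ^ 2 := by rw [hz]; ring
  have hw2 : w ^ 2 = 1 - k ^ 2 * (1 - (1 - h ^ 2) * (u ^ 2 + v ^ 2)) := by
    rw [hw, mul_pow, sq_sqrt hw0, hτ2, one_mul]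
  constructor
  · rw [hx2, hy2, hz2, hw2, hk2]
    have hne : a + b - (a * (1 - h ^ 2) + b) * u ^ 2 - (b * (1 - h ^ 2) + a) * v ^ 2 ≠ 0 := by linarith
    field_simp
    ring
  · rw [hx2, hy2, hz2, hw2]
    ring
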